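/- Let (Ω,F,P), K, k, β be as in the setup, and define the operator L_S by (L_S f)(x) = (1/2) Σ_{y∈ℤ^d} (k_{x−y} + k_{y−x})(f(y) − f(x)) for bounded f : ℤ^d → ℝ. Suppose G : ℤ^d → [0,∞) is bounded, G(x) → 0 as |x| → ∞, (L_S G)(x) = −δ_{0,x} for all x, and Σ_{x,y∈ℤ^d} G(x−y) β_{x,y} < 2. Then there exists a constant c > 0 such that the function h = 1 + cG satisfies: h(x) > 0 for all x, h(x) → 1 as |x| → ∞, and (L_S h)(x) + (1/2) δ_{0,x} Σ_{y,z∈ℤ^d} h(y−z) β_{y,z} = 0 for all x ∈ ℤ^d. -/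

import Mathlib

open MeasureTheory Filter
open scoped BigOperators

/-- If `G ≥ 0` is bounded, vanishes at infinity, satisfies `L_S G = −δ₀` and
`Σ_{x,y} G(x−y) β_{x,y} < 2`, then there is `c > 0` so that `h = 1 + cG` is positive,
tends to `1` at infinity and solves
`(L_S h)(x) + ½ δ_{0,x} Σ_{y,z} h(y−z) β_{y,z} = 0`, where
`(L_S f)(x) = ½ Σ_y (k_{x−y} + k_{y−x})(f(y) − f(x))`. -/
theorem stmt15 {d : ℕ} {Ω : Type*} [MeasurableSpace Ω] (P : Measure Ω)
    [IsProbabilityMeasure P]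
    (K : Ω → (Fin d → ℤ) → ℝ) (b r : ℝ)
    (hKmeas : ∀ x, Measurable fun ω => K ω x)
    (hKbd : ∀ᵐ ω ∂P, ∀ x, 0 ≤ K ω x ∧
      K ω x ≤ b * (if ((∑ i, |x i| : ℤ) : ℝ) ≤ r then 1 else 0))
    (k : (Fin d → ℤ) → ℝ) (hk : ∀ x, k x = ∫ ω, K ω x ∂P)
    (β : (Fin d → ℤ) → (Fin d → ℤ) → ℝ)
    (hβ : ∀ x y, β x y = ∫ ω, (K ω x - (if x = 0 then 1 else 0)) *
        (K ω y - (if y = 0 then 1 else 0)) ∂P)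
    (hbasis : ∃ v : Fin d → (Fin d → ℤ), (∀ i, k (v i) ≠ 0) ∧
      LinearIndependent ℝ fun i => fun j => ((v i j : ℝ)))
    (hK1 : P {ω | (∑' x, K ω x) = 1} < 1)
    (G : (Fin d → ℤ) → ℝ) (hG0 : ∀ x, 0 ≤ G x)
    (hGbd : ∃ M : ℝ, ∀ x, G x ≤ M)
    (hGlim : Tendsto G cofinite (nhds 0))
    (hGres : ∀ x, (1 / 2 : ℝ) * ∑' y, (k (x - y) + k (y - x)) * (G y - G x) =
      -(if x = 0 then 1 else 0))
    (hGβ : ∑' q : (Fin d → ℤ) × (Fin d → ℤ), G (q.1 - q.2) * β q.1 q.2 < 2) :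
    ∃ c > (0 : ℝ),
      (∀ x, 0 < 1 + c * G x) ∧
      Tendsto (fun x => 1 + c * G x) cofinite (nhds 1) ∧
      ∀ x, (1 / 2 : ℝ) * (∑' y, (k (x - y) + k (y - x)) *
            ((1 + c * G y) - (1 + c * G x))) +
          (1 / 2 : ℝ) * (if x = 0 then 1 else 0) *
            ∑' q : (Fin d → ℤ) × (Fin d → ℤ), (1 + c * G (q.1 - q.2)) * β q.1 q.2 = 0 := by
  classical
  set N : ℤ := max ⌈r⌉ 0 with hN
  set S : Finset (Fin d → ℤ) := Finset.Icc (fun _ => -N) (fun _ => N) with hS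
  have hNnonneg : (0 : ℤ) ≤ N := le_max_right _ _
  have hmemS : ∀ x : Fin d → ℤ, ((∑ i, |x i| : ℤ) : ℝ) ≤ r → x ∈ S := by
    intro x hx
    have hsum : (∑ i, |x i| : ℤ) ≤ N := by
      have h1 : (∑ i, |x i| : ℤ) ≤ ⌈r⌉ := by
        exact_mod_cast Int.cast_le.mp (le_trans hx (Int.le_ceil r))
      exact le_trans h1 (le_max_left _ _)
    rw [hS, Finset.mem_Icc]
    constructor <;> intro i
    · have : |x i| ≤ N := le_trans (Finset.single_le_sum (fun j _ => abs_nonneg (x j)) (Finset.mem_univ i)) hsum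
      have := abs_le.mp this
      simpa using this.1
    · have : |x i| ≤ N := le_trans (Finset.single_le_sum (fun j _ => abs_nonneg (x j)) (Finset.mem_univ i)) hsum
      exact le_trans (le_abs_self _) this
  have h0S : (0 : Fin d → ℤ) ∈ S := by
    rw [hS, Finset.mem_Icc]
    constructor <;> intro i <;> simp [neg_nonpos.mpr hNnonneg, hNnonneg]
  -- a.e. K vanishes outside S
  have hKvan : ∀ᵐ ω ∂P, ∀ x ∉ S, K ω x = 0 := by
    filter_upwards [hKbd] with ω hω x hx
    have h := hω x
    have hind : ¬ (((∑ i, |x i| : ℤ) : ℝ) ≤ r) := fun hc => hx (hmemS x hc)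
    rw [if_neg hind, mul_zero] at h
    exact le_antisymm h.2 h.1
  have hKabs : ∀ᵐ ω ∂P, ∀ x, |K ω x| ≤ |b| := by
    filter_upwards [hKbd] with ω hω x
    have h := hω x
    rw [abs_of_nonneg h.1]
    refine le_trans h.2 ?_
    by_cases hc : (((∑ i, |x i| : ℤ) : ℝ) ≤ r)
    · rw [if_pos hc, mul_one]; exact le_abs_self b
    · rw [if_neg hc, mul_zero]; exact abs_nonneg b
  set g : (Fin d → ℤ) → Ω → ℝ := fun x ω => K ω x - (if x = 0 then 1 else 0) with hg
  have hgmeas : ∀ x, Measurable (g x) := fun x => (hKmeas x).sub measurable_const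
  have hgbd : ∀ᵐ ω ∂P, ∀ x, |g x ω| ≤ |b| + 1 := by
    filter_upwards [hKabs] with ω hω x
    refine le_trans (abs_sub _ _) ?_
    have h2 : |(if x = 0 then (1:ℝ) else 0)| ≤ 1 := by split <;> simp
    exact add_le_add (hω x) h2
  have hgInt : ∀ x y, Integrable (fun ω => g x ω * g y ω) P := by
    intro x y
    refine Integrable.mono' (integrable_const ((|b| + 1) * (|b| + 1)))
      (((hgmeas x).mul (hgmeas y)).aestronglyMeasurable) ?_
    filter_upwards [hgbd] with ω hω
    rw [Real.norm_eq_abs, abs_mul]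
    exact mul_le_mul (hω x) (hω y) (abs_nonneg _) (by positivity)
  have hgvan : ∀ x ∉ S, ∀ᵐ ω ∂P, g x ω = 0 := by
    intro x hx
    filter_upwards [hKvan] with ω hω
    have hx0 : x ≠ 0 := fun hc => hx (hc ▸ h0S)
    simp [hg, hω x hx, hx0]
  -- β vanishes off S ×ˢ S
  have hβvan : ∀ q : (Fin d → ℤ) × (Fin d → ℤ), q ∉ S ×ˢ S → β q.1 q.2 = 0 := by
    intro q hq
    rw [Finset.mem_product, not_and_or] at hq
    rw [hβ]
    rcases hq with hq | hq
    · refine integral_eq_zero_of_ae ?_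
      filter_upwards [hgvan q.1 hq] with ω hω
      have hω' : (K ω q.1 - if q.1 = 0 then 1 else 0) = 0 := hω
      show (K ω q.1 - if q.1 = 0 then 1 else 0) * (K ω q.2 - if q.2 = 0 then 1 else 0) = 0
      rw [hω', zero_mul]
    · refine integral_eq_zero_of_ae ?_
      filter_upwards [hgvan q.2 hq] with ω hω
      have hω' : (K ω q.2 - if q.2 = 0 then 1 else 0) = 0 := hω
      show (K ω q.1 - if q.1 = 0 then 1 else 0) * (K ω q.2 - if q.2 = 0 then 1 else 0) = 0
      rw [hω', mul_zero]
  have hSummβ : Summable (fun q : (Fin d → ℤ) × (Fin d → ℤ) => β q.1 q.2) :=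
    summable_of_ne_finset_zero (s := S ×ˢ S) (fun q hq => hβvan q hq)
  have hSummGβ : Summable (fun q : (Fin d → ℤ) × (Fin d → ℤ) => G (q.1 - q.2) * β q.1 q.2) :=
    summable_of_ne_finset_zero (s := S ×ˢ S)
      (fun q hq => by rw [hβvan q hq, mul_zero])
  -- A = ∑' β = ∫ (∑ g)^2
  have hAsum : (∑' q : (Fin d → ℤ) × (Fin d → ℤ), β q.1 q.2)
      = ∑ q ∈ S ×ˢ S, β q.1 q.2 :=
    tsum_eq_sum (fun q hq => hβvan q hq)
  have hsqInt : Integrable (fun ω => (∑ x ∈ S, g x ω) ^ 2) P := by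
    have : (fun ω => (∑ x ∈ S, g x ω) ^ 2)
        = fun ω => ∑ q ∈ S ×ˢ S, g q.1 ω * g q.2 ω := by
      funext ω
      rw [sq, Finset.sum_mul_sum, Finset.sum_product]
    rw [this]
    exact integrable_finset_sum _ (fun q _ => hgInt q.1 q.2)
  have hAint : ∑ q ∈ S ×ˢ S, β q.1 q.2 = ∫ ω, (∑ x ∈ S, g x ω) ^ 2 ∂P := by
    have h1 : ∑ q ∈ S ×ˢ S, β q.1 q.2
        = ∑ q ∈ S ×ˢ S, ∫ ω, g q.1 ω * g q.2 ω ∂P := by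
      refine Finset.sum_congr rfl (fun q _ => ?_)
      rw [hβ]
    rw [h1, ← integral_finset_sum _ (fun q _ => hgInt q.1 q.2)]
    refine integral_congr_ae (Eventually.of_forall (fun ω => ?_))
    show ∑ q ∈ S ×ˢ S, g q.1 ω * g q.2 ω = (∑ x ∈ S, g x ω) ^ 2
    rw [sq, Finset.sum_mul_sum, Finset.sum_product]
  have hApos : 0 < ∑ q ∈ S ×ˢ S, β q.1 q.2 := by
    rw [hAint]
    rcases lt_or_eq_of_le (integral_nonneg (μ := P) (f := fun ω => (∑ x ∈ S, g x ω) ^ 2) (fun ω => sq_nonneg (∑ x ∈ S, g x ω))) with h | h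
    · exact h
    · exfalso
      have hzero : ∀ᵐ ω ∂P, (∑ x ∈ S, g x ω) ^ 2 = 0 := by
        have := (integral_eq_zero_iff_of_nonneg (fun ω => sq_nonneg (∑ x ∈ S, g x ω)) hsqInt).mp h.symm
        filter_upwards [this] with ω hω using hω
      have hone : ∀ᵐ ω ∂P, (∑' x, K ω x) = 1 := by
        filter_upwards [hzero, hKvan] with ω hω hv
        have hsum0 : ∑ x ∈ S, g x ω = 0 := by
          exact pow_eq_zero_iff (n := 2) (by norm_num) |>.mp hω
        have hKsum : ∑ x ∈ S, K ω x = 1 := by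
          have h' : ∑ x ∈ S, (K ω x - if x = 0 then 1 else 0) = 0 := hsum0
          rw [Finset.sum_sub_distrib,
            Finset.sum_ite_eq' S (0 : Fin d → ℤ) (fun _ => (1:ℝ)), if_pos h0S] at h'
          linarith
        rw [tsum_eq_sum (f := fun x => K ω x) (s := S) (fun x hx => hv x hx)]
        exact hKsum
      have : P {ω | (∑' x, K ω x) = 1} = 1 := by
        have hcompl : P {ω | ¬ ((∑' x, K ω x) = 1)} = 0 := by
          rw [← MeasureTheory.ae_iff]; exact hone
        have hle : (1 : ENNReal) ≤ P {ω | (∑' x, K ω x) = 1} := by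
          have huniv : (Set.univ : Set Ω) ⊆ {ω | (∑' x, K ω x) = 1} ∪ {ω | ¬ ((∑' x, K ω x) = 1)} := by
            intro ω _
            by_cases hc : (∑' x, K ω x) = 1
            · exact Or.inl hc
            · exact Or.inr hc
          calc (1 : ENNReal) = P Set.univ := (measure_univ).symm
            _ ≤ P ({ω | (∑' x, K ω x) = 1} ∪ {ω | ¬ ((∑' x, K ω x) = 1)}) := measure_mono huniv
            _ ≤ P {ω | (∑' x, K ω x) = 1} + P {ω | ¬ ((∑' x, K ω x) = 1)} := measure_union_le _ _
            _ = P {ω | (∑' x, K ω x) = 1} := by rw [hcompl, add_zero]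
        exact le_antisymm prob_le_one hle
      rw [this] at hK1
      exact lt_irrefl _ hK1
  set A : ℝ := ∑' q : (Fin d → ℤ) × (Fin d → ℤ), β q.1 q.2 with hA
  set B : ℝ := ∑' q : (Fin d → ℤ) × (Fin d → ℤ), G (q.1 - q.2) * β q.1 q.2 with hB
  have hApos' : 0 < A := by rw [hAsum]; exact hApos
  have hBlt : B < 2 := hGβ
  have h2B : 0 < 2 - B := by linarith
  refine ⟨A / (2 - B), div_pos hApos' h2B, ?_, ?_, ?_⟩
  · intro x
    have := mul_nonneg (le_of_lt (div_pos hApos' h2B)) (hG0 x)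
    linarith
  · have : Tendsto (fun x => 1 + A / (2 - B) * G x) cofinite (nhds (1 + A / (2 - B) * 0)) :=
      tendsto_const_nhds.add (hGlim.const_mul _)
    simpa using this
  · intro x
    set c : ℝ := A / (2 - B) with hc
    have hcB : c * (2 - B) = A := div_mul_cancel₀ A (ne_of_gt h2B)
    have h1 : (∑' y, (k (x - y) + k (y - x)) * ((1 + c * G y) - (1 + c * G x)))
        = c * ∑' y, (k (x - y) + k (y - x)) * (G y - G x) := by
      rw [← tsum_mul_left]
      exact tsum_congr (fun y => by ring)
    have h2 : (∑' q : (Fin d → ℤ) × (Fin d → ℤ), (1 + c * G (q.1 - q.2)) * β q.1 q.2)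
        = A + c * B := by
      have he : ∀ q : (Fin d → ℤ) × (Fin d → ℤ),
          (1 + c * G (q.1 - q.2)) * β q.1 q.2
          = β q.1 q.2 + c * (G (q.1 - q.2) * β q.1 q.2) := fun q => by ring
      rw [tsum_congr he, Summable.tsum_add hSummβ (hSummGβ.mul_left c), tsum_mul_left]
    rw [h1, h2]
    have h3 := hGres x
    by_cases hx : x = 0
    · rw [if_pos hx] at h3 ⊢
      have : (∑' y, (k (x - y) + k (y - x)) * (G y - G x)) = -2 := by linarith
      rw [this]
      nlinarith [hcB]
    · rw [if_neg hx] at h3 ⊢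
      have : (∑' y, (k (x - y) + k (y - x)) * (G y - G x)) = 0 := by linarith
      rw [this]
      ring
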